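/- arXiv:1207.6512 — 4 statements merged into one kernel-verified Lean document; each statement's English description precedes it below -/
import Mathlib

section
/- Suppose q = r^2 is odd, C_1 and C_2 are F_r-linear codes in F_q^n, and α ∈ F_q \ {0} satisfies α^r = -α. If C_1^{⊥_{TrE}} ⊆ C_2, then α^{-1} · conj(C_1^{⊥_{TrE}}) ⊆ (C_2^{⊥_{TrE}})^{⊥_{TrH}}, where conj applies x ↦ x^r coordinatewise. -/
/-- The trace Euclidean dual of a code `C ⊆ F_q^n`. -/
def traceDual (Fr : Type*) {Fq : Type*} [Field Fr] [Field Fq] [Algebra Fr Fq]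
    {n : ℕ} (C : Set (Fin n → Fq)) : Set (Fin n → Fq) :=
  {u | ∀ v ∈ C, Algebra.trace Fr Fq (∑ i, u i * v i) = 0}

/-- The trace Hermitian dual (odd `q = r²` case, with `ᾱ = -α`):
`{u | Tr(α ∑ u_i v̄_i) = 0 for all v ∈ C}` where `x̄ = x^r`. -/
def traceHermDualOdd (Fr : Type*) {Fq : Type*} [Field Fr] [Field Fq]
    [Fintype Fr] [Algebra Fr Fq] {n : ℕ} (α : Fq) (C : Set (Fin n → Fq)) :
    Set (Fin n → Fq) :=
  {u | ∀ v ∈ C,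
    Algebra.trace Fr Fq (α * ∑ i, u i * (v i) ^ Fintype.card Fr) = 0}

/-- Trace is invariant under the `r`-power Frobenius. -/
theorem trace_pow_card_aux {Fr Fq : Type*} [Field Fr] [Field Fq]
    [Fintype Fr] [Fintype Fq] [Algebra Fr Fq] (x : Fq) :
    Algebra.trace Fr Fq (x ^ Fintype.card Fr) = Algebra.trace Fr Fq x := by
  set p := ringChar Fr with hpdef
  haveI : CharP Fr p := ringChar.charP Fr
  obtain ⟨k, hp, hcard⟩ := FiniteField.card Fr p
  haveI : Fact p.Prime := ⟨hp⟩
  haveI : CharP Fq p := charP_of_injective_algebraMap (algebraMap Fr Fq).injective p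
  haveI : ExpChar Fq p := ExpChar.prime hp
  let e : Fq ≃ₐ[Fr] Fq :=
    AlgEquiv.ofRingEquiv (f := iterateFrobeniusEquiv Fq p k) (fun a => by
      rw [iterateFrobeniusEquiv_def, ← map_pow, ← hcard, FiniteField.pow_card])
  have := Algebra.trace_eq_of_algEquiv e x
  rwa [show e x = x ^ Fintype.card Fr by
    simp [e, AlgEquiv.ofRingEquiv, iterateFrobeniusEquiv_def, iterateFrobenius_def, hcard]] at this

/-- If `q = r²` is odd and `C₁^{⊥TrE} ⊆ C₂`, then
`α⁻¹ · conj(C₁^{⊥TrE}) ⊆ (C₂^{⊥TrE})^{⊥TrH}`. -/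
theorem traceDual_nested_herm_odd {Fr Fq : Type*} [Field Fr] [Field Fq]
    [Fintype Fr] [Fintype Fq] [Algebra Fr Fq]
    (hq : Fintype.card Fq = Fintype.card Fr ^ 2) (hodd : Odd (Fintype.card Fq))
    {n : ℕ} (C₁ C₂ : Submodule Fr (Fin n → Fq)) (α : Fq) (hα : α ≠ 0)
    (hαconj : α ^ Fintype.card Fr = -α)
    (h : traceDual Fr (C₁ : Set (Fin n → Fq)) ⊆ (C₂ : Set (Fin n → Fq))) :
    (fun u : Fin n → Fq => fun i => α⁻¹ * (u i) ^ Fintype.card Fr) ''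
        traceDual Fr (C₁ : Set (Fin n → Fq))
      ⊆ traceHermDualOdd Fr α (traceDual Fr (C₂ : Set (Fin n → Fq))) := by
  rintro w ⟨u, hu, rfl⟩ v hv
  set p := ringChar Fr with hpdef
  haveI : CharP Fr p := ringChar.charP Fr
  obtain ⟨k, hp, hcard⟩ := FiniteField.card Fr p
  haveI : Fact p.Prime := ⟨hp⟩
  haveI : CharP Fq p := charP_of_injective_algebraMap (algebraMap Fr Fq).injective p
  haveI : ExpChar Fq p := ExpChar.prime hp
  have key : α * ∑ i, (α⁻¹ * u i ^ Fintype.card Fr) * (v i ^ Fintype.card Fr)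
      = (∑ i, u i * v i) ^ Fintype.card Fr := by
    rw [Finset.mul_sum, hcard, sum_pow_char_pow]
    refine Finset.sum_congr rfl fun i _ => ?_
    field_simp
    ring
  rw [key, trace_pow_card_aux]
  have huv : Algebra.trace Fr Fq (∑ i, v i * u i) = 0 := hv u (h hu)
  rw [show (∑ i, u i * v i) = ∑ i, v i * u i by
    exact Finset.sum_congr rfl fun i _ => mul_comm _ _]
  exact huv
end

section
/- There is no pure [[5,1,3/2]]_2 CSS code; in particular, there does not exist a [5,2,3]_2 binary linear code containing a codeword of weight 5. -/
/-- No `[5,2,3]₂` binary linear code contains a codeword of weight `5`;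
in particular there is no pure `[[5,1,3/2]]₂` CSS code of this shape. -/
theorem no_weight_five_in_5_2_3_code (C : Submodule (ZMod 2) (Fin 5 → ZMod 2))
    (hdim : Module.finrank (ZMod 2) C = 2)
    (hd : ∀ c ∈ C, c ≠ 0 → 3 ≤ hammingNorm c) :
    ¬ ∃ v ∈ C, hammingNorm v = 5 := by
  rintro ⟨v, hvC, hv5⟩
  -- v is the all-ones vector
  have hvall : ∀ i, v i = 1 := by
    have hcard : (Finset.univ.filter (fun i => v i ≠ 0)).card = 5 := hv5
    have hfull : Finset.univ.filter (fun i => v i ≠ 0) = Finset.univ :=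
      Finset.eq_univ_of_card _ (by simpa using hcard)
    intro i
    have hmem : i ∈ Finset.univ.filter (fun i => v i ≠ 0) := by
      rw [hfull]; exact Finset.mem_univ i
    have hi : v i ≠ 0 := (Finset.mem_filter.mp hmem).2
    have : ∀ a : ZMod 2, a ≠ 0 → a = 1 := by decide
    exact this _ hi
  -- find w ∈ C outside span {v}
  have : ∃ w ∈ C, w ∉ Submodule.span (ZMod 2) {v} := by
    by_contra h
    push_neg at h
    have hle : C ≤ Submodule.span (ZMod 2) {v} := h
    have h1 : Module.finrank (ZMod 2) C ≤
        Module.finrank (ZMod 2) (Submodule.span (ZMod 2) {v}) :=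
      Submodule.finrank_mono hle
    have h2 : Module.finrank (ZMod 2) (Submodule.span (ZMod 2) {v}) ≤ 1 := by
      simpa using finrank_span_le_card ({v} : Set (Fin 5 → ZMod 2))
    omega
  obtain ⟨w, hwC, hwspan⟩ := this
  have hw0 : w ≠ 0 := by
    rintro rfl; exact hwspan (Submodule.zero_mem _)
  have hwv : w ≠ v := by
    rintro rfl; exact hwspan (Submodule.mem_span_singleton_self w)
  have hvw0 : v + w ≠ 0 := by
    intro h
    apply hwv
    funext i
    have := congrFun h i
    have h2 : ∀ a b : ZMod 2, a + b = 0 → b = a := by decide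
    exact h2 _ _ this
  have hwle : 3 ≤ hammingNorm w := hd w hwC hw0
  have hvwle : 3 ≤ hammingNorm (v + w) := hd _ (C.add_mem hvC hwC) hvw0
  -- supports of w and v + w are complementary
  have hsum : hammingNorm w + hammingNorm (v + w) = 5 := by
    have hEq : (Finset.univ.filter (fun i => (v + w) i ≠ 0)) =
        (Finset.univ.filter (fun i => ¬ w i ≠ 0)) := by
      apply Finset.filter_congr
      intro i _
      have hv1 := hvall i
      have key : ∀ a : ZMod 2, (1 + a ≠ 0) ↔ ¬ a ≠ 0 := by decide
      simp only [Pi.add_apply, hv1]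
      exact key (w i)
    have := Finset.card_filter_add_card_filter_not
      (s := (Finset.univ : Finset (Fin 5))) (p := fun i => w i ≠ 0)
    unfold hammingNorm
    rw [hEq]
    simpa using this
  omega
end

section
/- Structure of F_r-linear cyclic codes over a quadratic extension: any cyclic F_r-linear code C of length n over F_q = F_r(ω) (q = r^2) can be written as an F_r[x]-module C = ⟨a(x) + ω b(x), c(x)⟩ where a, b, c ∈ F_r[x], b and c are monic divisors of x^n - 1 in F_r[x], c divides a·(x^n-1)/b in F_r[x], and dim_{F_r} C = 2n - deg b - deg c. -/
/-- Generating set `{x^k·(a + ωb), x^k·c : k ∈ ℕ}` inside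
`F_q[x]/(x^n - 1)`, for `a, b, c ∈ F_r[x]`. Spanning over `F_r` gives the
`F_r[x]`-submodule generated by `a + ωb` and `c`. -/
def cyclicGenSet (Fr : Type*) {Fq : Type*} [Field Fr] [Field Fq] [Algebra Fr Fq]
    (ω : Fq) (n : ℕ) (a b c : Polynomial Fr) :
    Set (Polynomial Fq ⧸ Ideal.span {(Polynomial.X : Polynomial Fq) ^ n - 1}) :=
  {m | ∃ k : ℕ,
    m = (Ideal.Quotient.mk (Ideal.span {(Polynomial.X : Polynomial Fq) ^ n - 1})
          Polynomial.X) ^ k *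
        Ideal.Quotient.mk _ (a.map (algebraMap Fr Fq) +
          Polynomial.C ω * b.map (algebraMap Fr Fq)) ∨
    m = (Ideal.Quotient.mk (Ideal.span {(Polynomial.X : Polynomial Fq) ^ n - 1})
          Polynomial.X) ^ k *
        Ideal.Quotient.mk _ (c.map (algebraMap Fr Fq))}

open Polynomial

section CyclicTwoGenAux

variable {Fr Fq : Type*} [Field Fr] [Field Fq] [Algebra Fr Fq]

/-- Coefficientwise `i`-th coordinate of a polynomial over `Fq` w.r.t. a basis of `Fq` over
`Fr`. -/
noncomputable def ctgComp (B : Module.Basis (Fin 2) Fr Fq) (i : Fin 2) (p : Polynomial Fq) :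
    Polynomial Fr :=
  ⟨AddMonoidAlgebra.ofCoeff (p.toFinsupp.coeff.mapRange (fun a => B.repr a i) (by simp))⟩

lemma ctgComp_coeff (B : Module.Basis (Fin 2) Fr Fq) (i : Fin 2) (p : Polynomial Fq) (k : ℕ) :
    (ctgComp B i p).coeff k = B.repr (p.coeff k) i := rfl

lemma ctgComp_add (B : Module.Basis (Fin 2) Fr Fq) (i : Fin 2) (p q : Polynomial Fq) :
    ctgComp B i (p + q) = ctgComp B i p + ctgComp B i q := by
  ext k; simp [ctgComp_coeff]

lemma ctgComp_smul (B : Module.Basis (Fin 2) Fr Fq) (i : Fin 2) (r : Fr) (p : Polynomial Fq) :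
    ctgComp B i (r • p) = r • ctgComp B i p := by
  ext k; simp [ctgComp_coeff, coeff_smul]

/-- Reconstruction. -/
lemma ctgComp_recon (B : Module.Basis (Fin 2) Fr Fq) (hB0 : B 0 = 1) (hB1 : B 1 = ω)
    (p : Polynomial Fq) :
    p = (ctgComp B 0 p).map (algebraMap Fr Fq) + C ω * (ctgComp B 1 p).map (algebraMap Fr Fq) := by
  ext k
  have h := B.sum_repr (p.coeff k)
  rw [Fin.sum_univ_two, hB0, hB1] at h
  simp only [coeff_add, coeff_C_mul, coeff_map, ctgComp_coeff]
  conv_lhs => rw [← h]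
  simp [Algebra.smul_def, mul_comm]

lemma ctgComp_eval (B : Module.Basis (Fin 2) Fr Fq) (hB0 : B 0 = 1) (hB1 : B 1 = ω)
    (f g : Polynomial Fr) (i : Fin 2) :
    ctgComp B i (f.map (algebraMap Fr Fq) + C ω * g.map (algebraMap Fr Fq)) =
      if i = 0 then f else g := by
  ext k
  have : (f.map (algebraMap Fr Fq) + C ω * g.map (algebraMap Fr Fq)).coeff k
      = f.coeff k • B 0 + g.coeff k • B 1 := by
    simp [hB0, hB1, Algebra.smul_def, mul_comm]
  rw [ctgComp_coeff, this]
  simp only [map_add, map_smul, B.repr_self]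
  fin_cases i <;> simp [Finsupp.single_apply]

end CyclicTwoGenAux

section Quot

variable {Fr Fq : Type*} [Field Fr] [Field Fq] [Algebra Fr Fq]

/-- `Fr`-linear projection onto the ω-coordinate, on polynomial rings. -/
noncomputable def ctgComp1Lin (B : Module.Basis (Fin 2) Fr Fq) : Polynomial Fq →ₗ[Fr] Polynomial Fr where
  toFun := ctgComp B 1
  map_add' := ctgComp_add B 1
  map_smul' := ctgComp_smul B 1

lemma ctg_map_xn (n : ℕ) :
    ((X:Polynomial Fr)^n - 1).map (algebraMap Fr Fq) = (X:Polynomial Fq)^n - 1 := by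
  simp [Polynomial.map_sub, Polynomial.map_pow]

/-- ω-coordinate projection descends to quotients. -/
noncomputable def ctgPi (B : Module.Basis (Fin 2) Fr Fq) (ω : Fq) (hB0 : B 0 = 1) (hB1 : B 1 = ω)
    (n : ℕ) :
    (Polynomial Fq ⧸ Ideal.span {(X:Polynomial Fq)^n - 1}) →ₗ[Fr]
      (Polynomial Fr ⧸ Ideal.span {(X:Polynomial Fr)^n - 1}) :=
  (Submodule.liftQ ((Ideal.span {(X:Polynomial Fq)^n - 1}).restrictScalars Fr)
    ((Ideal.Quotient.mkₐ Fr (Ideal.span {(X:Polynomial Fr)^n - 1})).toLinearMap ∘ₗ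
      ctgComp1Lin B)
    (by
      intro p hp
      rw [Submodule.restrictScalars_mem, Ideal.mem_span_singleton] at hp
      obtain ⟨q, rfl⟩ := hp
      have hq := ctgComp_recon B hB0 hB1 (ω := ω) q
      have : ((X:Polynomial Fq)^n - 1) * q
          = (((X:Polynomial Fr)^n - 1) * ctgComp B 0 q).map (algebraMap Fr Fq)
            + C ω * (((X:Polynomial Fr)^n - 1) * ctgComp B 1 q).map (algebraMap Fr Fq) := by
        conv_lhs => rw [hq]
        simp only [Polynomial.map_mul, ctg_map_xn]
        ring
      simp only [LinearMap.mem_ker, LinearMap.comp_apply, ctgComp1Lin, LinearMap.coe_mk,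
        AddHom.coe_mk, this, ctgComp_eval B hB0 hB1]
      simp only [if_neg (by decide : ¬(1:Fin 2) = 0)]
      rw [AlgHom.toLinearMap_apply, Ideal.Quotient.mkₐ_eq_mk, Ideal.Quotient.eq_zero_iff_mem,
        Ideal.mem_span_singleton]
      exact Dvd.intro _ rfl)) ∘ₗ
  (Submodule.Quotient.restrictScalarsEquiv Fr
    ((Ideal.span {(X:Polynomial Fq)^n - 1}))).symm.toLinearMap

lemma ctgPi_mk (B : Module.Basis (Fin 2) Fr Fq) (ω : Fq) (hB0 : B 0 = 1) (hB1 : B 1 = ω)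
    (n : ℕ) (p : Polynomial Fq) :
    ctgPi B ω hB0 hB1 n (Ideal.Quotient.mk _ p) = Ideal.Quotient.mk _ (ctgComp B 1 p) := by
  simp [ctgPi, ctgComp1Lin, Submodule.Quotient.restrictScalarsEquiv_symm_mk]
  rfl

end Quot

section Mu

variable {Fr Fq : Type*} [Field Fr] [Field Fq] [Algebra Fr Fq]

lemma ctg_map_smul (r : Fr) (p : Polynomial Fr) :
    (r • p).map (algebraMap Fr Fq) = r • (p.map (algebraMap Fr Fq)) := by
  ext k
  simp [coeff_smul, coeff_map, Algebra.smul_def]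

/-- `map (algebraMap Fr Fq)` as an `Fr`-linear map into the quotient. -/
noncomputable def ctgMuAux (Fq : Type*) [Field Fq] [Algebra Fr Fq] (n : ℕ) :
    Polynomial Fr →ₗ[Fr] (Polynomial Fq ⧸ Ideal.span {(X:Polynomial Fq)^n - 1}) where
  toFun p := Ideal.Quotient.mk _ (p.map (algebraMap Fr Fq))
  map_add' p q := by simp [Polynomial.map_add]
  map_smul' r p := by
    simp only [RingHom.id_apply, ctg_map_smul]
    rfl

/-- The `Fr`-linear map `Fr[x]/(xⁿ-1) → Fq[x]/(xⁿ-1)` induced by `map (algebraMap Fr Fq)`. -/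
noncomputable def ctgMu (Fq : Type*) [Field Fq] [Algebra Fr Fq] (n : ℕ) :
    (Polynomial Fr ⧸ Ideal.span {(X:Polynomial Fr)^n - 1}) →ₗ[Fr]
      (Polynomial Fq ⧸ Ideal.span {(X:Polynomial Fq)^n - 1}) :=
  (Submodule.liftQ ((Ideal.span {(X:Polynomial Fr)^n - 1}).restrictScalars Fr)
    (ctgMuAux Fq n)
    (by
      intro p hp
      rw [Submodule.restrictScalars_mem, Ideal.mem_span_singleton] at hp
      simp only [LinearMap.mem_ker, ctgMuAux, LinearMap.coe_mk, AddHom.coe_mk,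
        Ideal.Quotient.eq_zero_iff_mem, Ideal.mem_span_singleton]
      rw [← ctg_map_xn (Fr := Fr) (Fq := Fq) n]
      exact Polynomial.map_dvd _ hp)) ∘ₗ
  (Submodule.Quotient.restrictScalarsEquiv Fr
    ((Ideal.span {(X:Polynomial Fr)^n - 1}))).symm.toLinearMap

lemma ctgMu_mk (n : ℕ) (p : Polynomial Fr) :
    ctgMu Fq n (Ideal.Quotient.mk _ p) = Ideal.Quotient.mk _ (p.map (algebraMap Fr Fq)) := by
  simp [ctgMu, ctgMuAux, Submodule.Quotient.restrictScalarsEquiv_symm_mk]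
  rfl

lemma ctgMu_injective (n : ℕ) : Function.Injective (ctgMu (Fr := Fr) Fq n) := by
  rw [← LinearMap.ker_eq_bot]
  rw [Submodule.eq_bot_iff]
  intro z hz
  obtain ⟨p, rfl⟩ := Ideal.Quotient.mk_surjective z
  rw [LinearMap.mem_ker, ctgMu_mk, Ideal.Quotient.eq_zero_iff_mem,
    Ideal.mem_span_singleton, ← ctg_map_xn (Fr := Fr) (Fq := Fq) n, map_dvd_map'] at hz
  rw [Ideal.Quotient.eq_zero_iff_mem, Ideal.mem_span_singleton]
  exact hz

end Mu

section Finrank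

variable {K : Type*} [Field K]

lemma ctg_finiteDimensional (K : Type*) [Field K] {n : ℕ} (hn : n ≠ 0) :
    FiniteDimensional K (Polynomial K ⧸ Ideal.span {(X:Polynomial K)^n - 1}) := by
  have h : ((X:Polynomial K)^n - 1) ≠ 0 := (monic_X_pow_sub_C (1:K) hn).ne_zero
  exact (AdjoinRoot.powerBasis h).finite

lemma ctg_finrank_quot (K : Type*) [Field K] {n : ℕ} (hn : n ≠ 0) :
    Module.finrank K (Polynomial K ⧸ Ideal.span {(X:Polynomial K)^n - 1}) = n := by
  have h : ((X:Polynomial K)^n - 1) ≠ 0 := (monic_X_pow_sub_C (1:K) hn).ne_zero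
  have := (AdjoinRoot.powerBasis h).finrank
  have h2 : ((X:Polynomial K)^n - 1).natDegree = n := by
    simpa using (natDegree_X_pow_sub_C (n:=n) (r:=(1:K)))
  rw [AdjoinRoot.powerBasis_dim, h2] at this
  exact this

lemma ctg_finrank_quot' (K : Type*) [Field K] {g : Polynomial K} (hg : g ≠ 0) :
    Module.finrank K (Polynomial K ⧸ Ideal.span {g}) = g.natDegree := by
  have := (AdjoinRoot.powerBasis hg).finrank
  rw [AdjoinRoot.powerBasis_dim] at this
  exact this

set_option synthInstance.maxHeartbeats 1000000 in
set_option maxHeartbeats 2000000 in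
lemma ctg_finrank_ideal {n : ℕ} (hn : n ≠ 0) {g : Polynomial K} (hg : g.Monic)
    (hdvd : g ∣ (X:Polynomial K)^n - 1) :
    Module.finrank K
      ((Ideal.span {Ideal.Quotient.mk (Ideal.span {(X:Polynomial K)^n - 1}) g}).restrictScalars K)
      + g.natDegree = n := by
  haveI := ctg_finiteDimensional K hn
  set I : Ideal (Polynomial K) := Ideal.span {(X:Polynomial K)^n - 1} with hI
  set J : Ideal (Polynomial K) := Ideal.span {g} with hJ
  have hle : I ≤ J := by
    rw [hI, hJ, Ideal.span_singleton_le_span_singleton]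
    exact hdvd
  have hmap : J.map (Ideal.Quotient.mk I) = Ideal.span {Ideal.Quotient.mk I g} := by
    rw [hJ, Ideal.map_span, Set.image_singleton]
  have hmapₐ : J.map (Ideal.Quotient.mkₐ K I) = Ideal.span {Ideal.Quotient.mk I g} := by
    rw [show (Ideal.Quotient.mkₐ K I : Polynomial K →ₐ[K] _) = _ from rfl]
    exact hmap
  -- quotient of quotient
  have e1 := (DoubleQuot.quotQuotEquivQuotSupₐ K I J).toLinearEquiv
  have hsup : I ⊔ J = J := sup_eq_right.mpr hle
  have e2 := (Ideal.quotientEquivAlgOfEq K hsup).toLinearEquiv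
  have hq : Module.finrank K
      ((Polynomial K ⧸ I) ⧸ (Ideal.span {Ideal.Quotient.mk I g})) = g.natDegree := by
    rw [← hmapₐ]
    rw [(e1.trans e2).finrank_eq]
    exact ctg_finrank_quot' K hg.ne_zero
  have e3 := Submodule.Quotient.restrictScalarsEquiv K
    ((Ideal.span {Ideal.Quotient.mk I g}) : Ideal (Polynomial K ⧸ I))
  have h4 := Submodule.finrank_quotient_add_finrank
    ((Ideal.span {Ideal.Quotient.mk I g}).restrictScalars K
      : Submodule K (Polynomial K ⧸ I))
  rw [e3.finrank_eq, hq] at h4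
  rw [ctg_finrank_quot K hn] at h4
  omega

end Finrank

section Closure

variable {Fr Fq : Type*} [Field Fr] [Field Fq] [Algebra Fr Fq] {n : ℕ}

lemma ctg_smulC (r : Fr) (z : Polynomial Fq ⧸ Ideal.span {(X:Polynomial Fq)^n - 1}) :
    Ideal.Quotient.mk _ (C (algebraMap Fr Fq r)) * z = r • z := by
  obtain ⟨p, rfl⟩ := Ideal.Quotient.mk_surjective z
  have h : C (algebraMap Fr Fq r) * p = r • p := by
    ext k; simp [coeff_smul, Algebra.smul_def]
  rw [← map_mul, h]
  rfl

lemma ctg_pow_closure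
    (C : Submodule Fr (Polynomial Fq ⧸ Ideal.span {(X:Polynomial Fq)^n - 1}))
    (hC : ∀ m ∈ C, Ideal.Quotient.mk (Ideal.span {(X:Polynomial Fq)^n - 1}) X * m ∈ C)
    (k : ℕ) : ∀ m ∈ C,
      (Ideal.Quotient.mk (Ideal.span {(X:Polynomial Fq)^n - 1}) X)^k * m ∈ C := by
  induction k with
  | zero => intro m hm; simpa using hm
  | succ k ih =>
    intro m hm
    rw [pow_succ, mul_comm ((Ideal.Quotient.mk _ X)^k), mul_assoc]
    exact hC _ (ih m hm)

lemma ctg_closure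
    (C : Submodule Fr (Polynomial Fq ⧸ Ideal.span {(X:Polynomial Fq)^n - 1}))
    (hC : ∀ m ∈ C, Ideal.Quotient.mk (Ideal.span {(X:Polynomial Fq)^n - 1}) X * m ∈ C)
    (d : Polynomial Fr) : ∀ m ∈ C,
      Ideal.Quotient.mk _ (d.map (algebraMap Fr Fq)) * m ∈ C := by
  induction d using Polynomial.induction_on' with
  | add p q hp hq =>
    intro m hm
    rw [Polynomial.map_add, map_add, add_mul]
    exact C.add_mem (hp m hm) (hq m hm)
  | monomial k r =>
    intro m hm
    rw [Polynomial.map_monomial, ← Polynomial.C_mul_X_pow_eq_monomial, map_mul, map_pow,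
      mul_assoc, ctg_smulC]
    exact C.smul_mem r (ctg_pow_closure C hC k m hm)

lemma ctg_spanmul (T : Set (Polynomial Fq ⧸ Ideal.span {(X:Polynomial Fq)^n - 1}))
    (u : Polynomial Fr) (z : Polynomial Fq ⧸ Ideal.span {(X:Polynomial Fq)^n - 1})
    (hz : ∀ k : ℕ, (Ideal.Quotient.mk (Ideal.span {(X:Polynomial Fq)^n - 1}) X)^k * z ∈ T) :
    Ideal.Quotient.mk _ (u.map (algebraMap Fr Fq)) * z ∈ Submodule.span Fr T := by
  induction u using Polynomial.induction_on' with
  | add p q hp hq =>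
    rw [Polynomial.map_add, map_add, add_mul]
    exact Submodule.add_mem _ hp hq
  | monomial k r =>
    rw [Polynomial.map_monomial, ← Polynomial.C_mul_X_pow_eq_monomial, map_mul, map_pow,
      mul_assoc, ctg_smulC]
    exact Submodule.smul_mem _ r (Submodule.subset_span (hz k))

/-- Monic generator of an ideal containing `xⁿ-1`. -/
lemma ctg_monic_gen {K : Type*} [Field K] (hn : n ≠ 0) (J : Ideal (Polynomial K))
    (hJ : (X:Polynomial K)^n - 1 ∈ J) :
    ∃ g : Polynomial K, g.Monic ∧ J = Ideal.span {g} ∧ g ∣ (X:Polynomial K)^n - 1 := by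
  obtain ⟨g0, hg0⟩ := (IsPrincipalIdealRing.principal J).principal
  have hxn : ((X:Polynomial K)^n - 1) ≠ 0 := (monic_X_pow_sub_C (1:K) hn).ne_zero
  have hg0ne : g0 ≠ 0 := by
    rintro rfl
    rw [hg0] at hJ
    simp only [Ideal.submodule_span_eq, Ideal.span_singleton_eq_bot.mpr rfl,
      Ideal.mem_bot] at hJ
    exact hxn hJ
  refine ⟨g0 * C g0.leadingCoeff⁻¹, monic_mul_leadingCoeff_inv hg0ne, ?_, ?_⟩
  · rw [hg0]
    rw [Ideal.submodule_span_eq,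
      Ideal.span_singleton_mul_right_unit (IsUnit.map C (isUnit_iff_ne_zero.mpr
        (inv_ne_zero (leadingCoeff_ne_zero.mpr hg0ne))))]
  · have h1 : (X:Polynomial K)^n - 1 ∈ Ideal.span {g0} := by
      rw [Ideal.span, ← hg0]; exact hJ
    rw [Ideal.mem_span_singleton] at h1
    have hu : IsUnit (C g0.leadingCoeff⁻¹) :=
      IsUnit.map C (isUnit_iff_ne_zero.mpr (inv_ne_zero (leadingCoeff_ne_zero.mpr hg0ne)))
    exact ((associated_mul_unit_right g0 _ hu).symm.dvd).trans h1

end Closure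

set_option maxHeartbeats 4000000 in
set_option synthInstance.maxHeartbeats 1000000 in
/-- Structure theorem: a cyclic `F_r`-linear code of length `n` over the
quadratic extension `F_q = F_r(ω)` has a two-generator representation
`⟨a + ωb, c⟩`, with `b, c` monic divisors of `xⁿ-1`, `c ∣ a·(xⁿ-1)/b`, and
`dim_{F_r} C = 2n - deg b - deg c`. -/
theorem cyclic_subfield_linear_two_generators {Fr Fq : Type*} [Field Fr]
    [Field Fq] [Fintype Fr] [Fintype Fq] [Algebra Fr Fq]
    (ω : Fq) (B : Module.Basis (Fin 2) Fr Fq) (hB0 : B 0 = 1) (hB1 : B 1 = ω)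
    {n : ℕ} (hn : 0 < n)
    (C : Submodule Fr
      (Polynomial Fq ⧸ Ideal.span {(Polynomial.X : Polynomial Fq) ^ n - 1}))
    (hC : ∀ m ∈ C,
      Ideal.Quotient.mk (Ideal.span {(Polynomial.X : Polynomial Fq) ^ n - 1})
        Polynomial.X * m ∈ C) :
    ∃ a b c : Polynomial Fr, b.Monic ∧ c.Monic ∧
      b ∣ (Polynomial.X ^ n - 1) ∧ c ∣ (Polynomial.X ^ n - 1) ∧
      c ∣ a * ((Polynomial.X ^ n - 1) /ₘ b) ∧
      C = Submodule.span Fr (cyclicGenSet Fr ω n a b c) ∧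
      Module.finrank Fr C = 2 * n - b.natDegree - c.natDegree := by
  classical
  let mkq : Polynomial Fq →+* _ := Ideal.Quotient.mk (Ideal.span {(X : Polynomial Fq) ^ n - 1})
  -- the two ideals
  let J1 : Ideal (Polynomial Fr) :=
    { carrier := {g | ∃ f : Polynomial Fr,
        mkq (f.map (algebraMap Fr Fq) + Polynomial.C ω * g.map (algebraMap Fr Fq)) ∈ C},
      add_mem' := by
        rintro g1 g2 ⟨f1, h1⟩ ⟨f2, h2⟩
        refine ⟨f1 + f2, ?_⟩
        have hpoly : (f1+f2).map (algebraMap Fr Fq) + Polynomial.C ω * (g1+g2).map (algebraMap Fr Fq)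
            = (f1.map (algebraMap Fr Fq) + Polynomial.C ω * g1.map (algebraMap Fr Fq))
              + (f2.map (algebraMap Fr Fq) + Polynomial.C ω * g2.map (algebraMap Fr Fq)) := by
          rw [Polynomial.map_add, Polynomial.map_add]; ring
        rw [hpoly, map_add]
        exact C.add_mem h1 h2
      zero_mem' := ⟨0, by simp⟩
      smul_mem' := by
        rintro h g ⟨f, hf⟩
        refine ⟨h * f, ?_⟩
        have hpoly : (h*f).map (algebraMap Fr Fq) + Polynomial.C ω * (h • g).map (algebraMap Fr Fq)
            = h.map (algebraMap Fr Fq) *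
              (f.map (algebraMap Fr Fq) + Polynomial.C ω * g.map (algebraMap Fr Fq)) := by
          rw [smul_eq_mul, Polynomial.map_mul, Polynomial.map_mul]; ring
        rw [hpoly, map_mul]
        exact ctg_closure C hC h _ hf }
  let J0 : Ideal (Polynomial Fr) :=
    { carrier := {f | mkq (f.map (algebraMap Fr Fq)) ∈ C},
      add_mem' := by
        intro f1 f2 h1 h2
        show mkq ((f1+f2).map (algebraMap Fr Fq)) ∈ C
        rw [Polynomial.map_add, map_add]
        exact C.add_mem h1 h2
      zero_mem' := by simp [Set.mem_setOf_eq]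
      smul_mem' := by
        intro h f hf
        show mkq ((h • f).map (algebraMap Fr Fq)) ∈ C
        rw [smul_eq_mul, Polynomial.map_mul, map_mul]
        exact ctg_closure C hC h _ hf }
  have hxnJ1 : (X : Polynomial Fr)^n - 1 ∈ J1 := by
    refine ⟨0, ?_⟩
    have : (0 : Polynomial Fr).map (algebraMap Fr Fq)
        + Polynomial.C ω * ((X : Polynomial Fr)^n - 1).map (algebraMap Fr Fq)
        = Polynomial.C ω * ((X : Polynomial Fq)^n - 1) := by
      rw [ctg_map_xn]; simp
    rw [this, map_mul]
    have hz : mkq ((X : Polynomial Fq)^n - 1) = 0 := by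
      rw [Ideal.Quotient.eq_zero_iff_mem]; exact Ideal.subset_span rfl
    rw [hz, mul_zero]
    exact C.zero_mem
  have hxnJ0 : (X : Polynomial Fr)^n - 1 ∈ J0 := by
    show mkq (((X : Polynomial Fr)^n - 1).map (algebraMap Fr Fq)) ∈ C
    rw [ctg_map_xn]
    have hz : mkq ((X : Polynomial Fq)^n - 1) = 0 := by
      rw [Ideal.Quotient.eq_zero_iff_mem]; exact Ideal.subset_span rfl
    rw [hz]
    exact C.zero_mem
  obtain ⟨b, hbm, hJ1, hbdvd⟩ := ctg_monic_gen hn.ne' J1 hxnJ1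
  obtain ⟨c, hcm, hJ0, hcdvd⟩ := ctg_monic_gen hn.ne' J0 hxnJ0
  have hbJ1 : b ∈ J1 := by rw [hJ1]; exact Ideal.mem_span_singleton_self b
  obtain ⟨a, ha⟩ := hbJ1
  have hcC : mkq (c.map (algebraMap Fr Fq)) ∈ C := by
    have : c ∈ J0 := by rw [hJ0]; exact Ideal.mem_span_singleton_self c
    exact this
  -- divisibility condition
  set d : Polynomial Fr := ((X : Polynomial Fr)^n - 1) /ₘ b with hd
  have hbd : b * d = (X : Polynomial Fr)^n - 1 := by
    have h0 : ((X : Polynomial Fr)^n - 1) %ₘ b = 0 :=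
      (Polynomial.modByMonic_eq_zero_iff_dvd hbm).mpr hbdvd
    have := Polynomial.modByMonic_add_div ((X : Polynomial Fr)^n - 1) b
    rw [h0, zero_add] at this
    exact this
  have hcda : c ∣ a * d := by
    have h1 : mkq ((d * a).map (algebraMap Fr Fq)) ∈ C := by
      have h2 := ctg_closure C hC d _ ha
      have hpoly : d.map (algebraMap Fr Fq) *
          (a.map (algebraMap Fr Fq) + Polynomial.C ω * b.map (algebraMap Fr Fq))
          = (d*a).map (algebraMap Fr Fq) + Polynomial.C ω * ((X : Polynomial Fq)^n - 1) := by
        rw [← ctg_map_xn (Fr := Fr) (Fq := Fq) n, ← hbd, Polynomial.map_mul,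
          Polynomial.map_mul]
        ring
      rw [← map_mul, hpoly, map_add, map_mul] at h2
      have hz : mkq ((X : Polynomial Fq)^n - 1) = 0 := by
        rw [Ideal.Quotient.eq_zero_iff_mem]; exact Ideal.subset_span rfl
      rwa [hz, mul_zero, add_zero] at h2
    have : d * a ∈ J0 := h1
    rw [hJ0, Ideal.mem_span_singleton] at this
    rwa [mul_comm] at this
  refine ⟨a, b, c, hbm, hcm, hbdvd, hcdvd, hcda, ?_, ?_⟩
  · -- span equality
    apply le_antisymm
    · -- C ≤ span
      intro m hm
      obtain ⟨p, rfl⟩ := Ideal.Quotient.mk_surjective m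
      set f : Polynomial Fr := ctgComp B 0 p with hf
      set g : Polynomial Fr := ctgComp B 1 p with hg
      have hrecon : p = f.map (algebraMap Fr Fq) + Polynomial.C ω * g.map (algebraMap Fr Fq) :=
        ctgComp_recon B hB0 hB1 p
      have hgJ1 : g ∈ J1 := ⟨f, by rw [← hrecon]; exact hm⟩
      rw [hJ1, Ideal.mem_span_singleton] at hgJ1
      obtain ⟨u, hu⟩ := hgJ1
      have hpoly : p = u.map (algebraMap Fr Fq) *
          (a.map (algebraMap Fr Fq) + Polynomial.C ω * b.map (algebraMap Fr Fq))
          + (f - u*a).map (algebraMap Fr Fq) := by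
        conv_lhs => rw [hrecon, hu]
        rw [Polynomial.map_sub, Polynomial.map_mul, Polynomial.map_mul]
        ring
      have hkey : mkq p = mkq (u.map (algebraMap Fr Fq)) *
          mkq (a.map (algebraMap Fr Fq) + Polynomial.C ω * b.map (algebraMap Fr Fq))
          + mkq ((f - u*a).map (algebraMap Fr Fq)) := by
        conv_lhs => rw [hpoly]
        rw [map_add, map_mul]
      have hfC : mkq ((f - u*a).map (algebraMap Fr Fq)) ∈ C := by
        have h3 := C.sub_mem hm (ctg_closure C hC u _ ha)
        rw [hkey] at h3
        simp only [mkq] at h3 ⊢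
        rwa [add_sub_cancel_left] at h3
      have : f - u*a ∈ J0 := hfC
      rw [hJ0, Ideal.mem_span_singleton] at this
      obtain ⟨v, hv⟩ := this
      have hkey2 : mkq p = mkq (u.map (algebraMap Fr Fq)) *
          mkq (a.map (algebraMap Fr Fq) + Polynomial.C ω * b.map (algebraMap Fr Fq))
          + mkq (v.map (algebraMap Fr Fq)) * mkq (c.map (algebraMap Fr Fq)) := by
        rw [hkey, hv, Polynomial.map_mul, map_mul, mul_comm (mkq (c.map (algebraMap Fr Fq)))]
      rw [hkey2]
      refine Submodule.add_mem _ ?_ ?_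
      · exact ctg_spanmul _ u _ (fun k => ⟨k, Or.inl rfl⟩)
      · exact ctg_spanmul _ v _ (fun k => ⟨k, Or.inr rfl⟩)
    · -- span ≤ C
      rw [Submodule.span_le]
      rintro z ⟨k, (rfl | rfl)⟩
      · exact ctg_pow_closure C hC k _ ha
      · exact ctg_pow_closure C hC k _ hcC
  · -- finrank
    have hnne : n ≠ 0 := hn.ne'
    haveI hfdq : FiniteDimensional Fq
        (Polynomial Fq ⧸ Ideal.span {(X : Polynomial Fq)^n - 1}) :=
      ctg_finiteDimensional Fq hnne
    haveI hfdrfq : FiniteDimensional Fr Fq := Module.Finite.of_basis B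
    haveI hfdr : FiniteDimensional Fr
        (Polynomial Fq ⧸ Ideal.span {(X : Polynomial Fq)^n - 1}) :=
      Module.Finite.trans Fq _
    set π := ctgPi B ω hB0 hB1 n with hπ
    set φ : C →ₗ[Fr] _ := π.comp C.subtype with hφ
    have hrange : LinearMap.range φ =
        (Ideal.span {Ideal.Quotient.mk (Ideal.span {(X : Polynomial Fr)^n - 1}) b}).restrictScalars
          Fr := by
      apply le_antisymm
      · rintro z ⟨⟨m, hm⟩, rfl⟩
        obtain ⟨p, rfl⟩ := Ideal.Quotient.mk_surjective m
        show π (Ideal.Quotient.mk _ p) ∈ _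
        rw [hπ, ctgPi_mk]
        rw [Submodule.restrictScalars_mem, Ideal.mem_span_singleton]
        have hgJ1 : ctgComp B 1 p ∈ J1 :=
          ⟨ctgComp B 0 p, by rw [← ctgComp_recon B hB0 hB1 p]; exact hm⟩
        rw [hJ1, Ideal.mem_span_singleton] at hgJ1
        exact map_dvd (Ideal.Quotient.mk _) hgJ1
      · rintro z hz
        rw [Submodule.restrictScalars_mem, Ideal.mem_span_singleton] at hz
        obtain ⟨w, hw⟩ := hz
        obtain ⟨u, rfl⟩ := Ideal.Quotient.mk_surjective w
        have hmem : Ideal.Quotient.mk (Ideal.span {(X : Polynomial Fq)^n - 1})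
            (u.map (algebraMap Fr Fq)) *
            Ideal.Quotient.mk _ (a.map (algebraMap Fr Fq)
              + Polynomial.C ω * b.map (algebraMap Fr Fq)) ∈ C :=
          ctg_closure C hC u _ ha
        refine ⟨⟨_, hmem⟩, ?_⟩
        simp only [hφ, LinearMap.comp_apply, Submodule.coe_subtype]
        have hpoly : u.map (algebraMap Fr Fq) *
            (a.map (algebraMap Fr Fq) + Polynomial.C ω * b.map (algebraMap Fr Fq))
            = (u*a).map (algebraMap Fr Fq)
              + Polynomial.C ω * (u*b).map (algebraMap Fr Fq) := by
          rw [Polynomial.map_mul, Polynomial.map_mul]; ring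
        rw [hπ, ← map_mul, hpoly, ctgPi_mk]
        have hcomp : ctgComp B 1 ((u*a).map (algebraMap Fr Fq)
            + Polynomial.C ω * (u*b).map (algebraMap Fr Fq)) = u*b := by
          simpa using ctgComp_eval B hB0 hB1 (u*a) (u*b) 1
        rw [hcomp, hw, map_mul, mul_comm]
    have hμinj := ctgMu_injective (Fr := Fr) (Fq := Fq) n
    have hker : LinearMap.ker π ⊓ C = Submodule.map (ctgMu Fq n)
        ((Ideal.span {Ideal.Quotient.mk (Ideal.span {(X : Polynomial Fr)^n - 1}) c}).restrictScalars
          Fr) := by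
      apply le_antisymm
      · intro m hmm
        rw [Submodule.mem_inf] at hmm
        obtain ⟨hk, hm⟩ := hmm
        obtain ⟨p, rfl⟩ := Ideal.Quotient.mk_surjective m
        rw [LinearMap.mem_ker, hπ, ctgPi_mk, Ideal.Quotient.eq_zero_iff_mem,
          Ideal.mem_span_singleton] at hk
        obtain ⟨t, ht⟩ := hk
        have hzero : Ideal.Quotient.mk (Ideal.span {(X : Polynomial Fq)^n - 1})
            (Polynomial.C ω * (ctgComp B 1 p).map (algebraMap Fr Fq)) = 0 := by
          rw [Ideal.Quotient.eq_zero_iff_mem]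
          have : (ctgComp B 1 p).map (algebraMap Fr Fq)
              = ((X : Polynomial Fq)^n - 1) * t.map (algebraMap Fr Fq) := by
            rw [ht, Polynomial.map_mul, ctg_map_xn]
          rw [this]
          exact Ideal.mul_mem_left _ _ (Ideal.mul_mem_right _ _ (Ideal.subset_span rfl))
        have hmeq : Ideal.Quotient.mk (Ideal.span {(X : Polynomial Fq)^n - 1}) p
            = Ideal.Quotient.mk _ ((ctgComp B 0 p).map (algebraMap Fr Fq)) := by
          conv_lhs => rw [ctgComp_recon B hB0 hB1 p]
          rw [map_add, hzero, add_zero]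
        have hfJ0 : ctgComp B 0 p ∈ J0 := by
          show Ideal.Quotient.mk (Ideal.span {(X : Polynomial Fq)^n - 1})
            ((ctgComp B 0 p).map (algebraMap Fr Fq)) ∈ C
          rw [← hmeq]; exact hm
        rw [hJ0, Ideal.mem_span_singleton] at hfJ0
        refine Submodule.mem_map.mpr ⟨Ideal.Quotient.mk _ (ctgComp B 0 p), ?_, ?_⟩
        · rw [Submodule.restrictScalars_mem, Ideal.mem_span_singleton]
          exact map_dvd (Ideal.Quotient.mk _) hfJ0
        · rw [ctgMu_mk, ← hmeq]
      · intro m hmm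
        obtain ⟨w, hw, rfl⟩ := Submodule.mem_map.mp hmm
        rw [Submodule.restrictScalars_mem, Ideal.mem_span_singleton] at hw
        obtain ⟨v, hv⟩ := hw
        obtain ⟨u, rfl⟩ := Ideal.Quotient.mk_surjective v
        have hweq : Ideal.Quotient.mk (Ideal.span {(X : Polynomial Fr)^n - 1}) c *
            Ideal.Quotient.mk _ u = Ideal.Quotient.mk _ (c * u) := by rw [map_mul]
        rw [hv, hweq, ctgMu_mk]
        rw [Submodule.mem_inf]
        constructor
        · rw [LinearMap.mem_ker, hπ, ctgPi_mk]
          have : ctgComp B 1 ((c*u).map (algebraMap Fr Fq)) = 0 := by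
            have h5 : (c*u).map (algebraMap Fr Fq) = (c*u).map (algebraMap Fr Fq)
                + Polynomial.C ω * (0 : Polynomial Fr).map (algebraMap Fr Fq) := by simp
            rw [h5]
            simpa using ctgComp_eval B hB0 hB1 (c*u) 0 1
          rw [this, map_zero]
        · have : (c*u).map (algebraMap Fr Fq)
              = u.map (algebraMap Fr Fq) * c.map (algebraMap Fr Fq) := by
            rw [Polynomial.map_mul]; ring
          rw [this, map_mul]
          exact ctg_closure C hC u _ hcC
    have hkerφ : LinearMap.ker φ = Submodule.comap C.subtype (LinearMap.ker π ⊓ C) := by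
      rw [hφ, LinearMap.ker_comp]
      ext ⟨m, hm⟩
      simp [Submodule.mem_comap, hm]
    have hrank := LinearMap.finrank_range_add_finrank_ker φ
    have hkerrank : Module.finrank Fr (LinearMap.ker φ) = Module.finrank Fr
        ((Ideal.span {Ideal.Quotient.mk (Ideal.span {(X : Polynomial Fr)^n - 1}) c}).restrictScalars
          Fr) := by
      rw [hkerφ]
      rw [(Submodule.comapSubtypeEquivOfLe inf_le_right).finrank_eq, hker]
      exact (Submodule.equivMapOfInjective _ hμinj _).symm.finrank_eq
    rw [hrange, hkerrank] at hrank
    have hb' := ctg_finrank_ideal (K := Fr) hnne hbm hbdvd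
    have hc' := ctg_finrank_ideal (K := Fr) hnne hcm hcdvd
    omega
end

section
/- In the setting of the two-generator representation of a cyclic F_r-linear code C over F_q = F_r(ω): if ⟨a(x)+ωb(x), c(x)⟩ = ⟨a'(x)+ωb'(x), c'(x)⟩ with both representations satisfying the divisibility/monicity conditions, then b' = b, c' = c, and a' ≡ a (mod c(x)). -/
open Polynomial
namespace CycAux
variable {Fr Fq : Type*} [Field Fr] [Field Fq] [Algebra Fr Fq]

noncomputable def T (π : Fq →ₗ[Fr] Fr) (p : Polynomial Fq) : Polynomial Fr :=
  ⟨AddMonoidAlgebra.ofCoeff (Finsupp.mapRange π (map_zero π) p.toFinsupp.coeff)⟩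

lemma coeff_T (π : Fq →ₗ[Fr] Fr) (p : Polynomial Fq) (k : ℕ) :
    (T π p).coeff k = π (p.coeff k) := rfl

lemma T_sub (π : Fq →ₗ[Fr] Fr) (p q : Polynomial Fq) :
    T π (p - q) = T π p - T π q := by
  ext k; simp [coeff_T, map_sub]

lemma T_add (π : Fq →ₗ[Fr] Fr) (p q : Polynomial Fq) :
    T π (p + q) = T π p + T π q := by
  ext k; simp [coeff_T, map_add]

lemma T_qmul (π : Fq →ₗ[Fr] Fr) (g : Polynomial Fr) (p : Polynomial Fq) :
    T π (g.map (algebraMap Fr Fq) * p) = g * T π p := by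
  ext k
  simp only [coeff_T, coeff_mul, coeff_map, map_sum]
  refine Finset.sum_congr rfl fun x _ => ?_
  rw [← Algebra.smul_def, map_smul, smul_eq_mul]

variable (ω : Fq) (B : Module.Basis (Fin 2) Fr Fq) (hB0 : B 0 = 1) (hB1 : B 1 = ω)

lemma coord_smul_basis (i j : Fin 2) (r : Fr) :
    B.coord i (r • B j) = if j = i then r else 0 := by
  rw [map_smul, smul_eq_mul, Module.Basis.coord_apply, Module.Basis.repr_self, Finsupp.single_apply]
  split <;> simp

include hB0 in
lemma coord_alg (i : Fin 2) (r : Fr) :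
    B.coord i (algebraMap Fr Fq r) = if (0:Fin 2) = i then r else 0 := by
  rw [Algebra.algebraMap_eq_smul_one, ← hB0, coord_smul_basis]

include hB1 in
lemma coord_omega_alg (i : Fin 2) (r : Fr) :
    B.coord i (ω * algebraMap Fr Fq r) = if (1:Fin 2) = i then r else 0 := by
  rw [mul_comm, ← Algebra.smul_def, ← hB1, coord_smul_basis]

include hB0 in
lemma T0_q (f : Polynomial Fr) : T (B.coord 0) (f.map (algebraMap Fr Fq)) = f := by
  ext k; rw [coeff_T, coeff_map, coord_alg B hB0]; simp

include hB0 in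
lemma T1_q (f : Polynomial Fr) : T (B.coord 1) (f.map (algebraMap Fr Fq)) = 0 := by
  ext k; rw [coeff_T, coeff_map, coord_alg B hB0]; simp

include hB1 in
lemma T1_omega_q (f : Polynomial Fr) :
    T (B.coord 1) (C ω * f.map (algebraMap Fr Fq)) = f := by
  ext k; rw [coeff_T, coeff_C_mul, coeff_map, coord_omega_alg ω B hB1]; simp

include hB1 in
lemma T0_omega_q (f : Polynomial Fr) :
    T (B.coord 0) (C ω * f.map (algebraMap Fr Fq)) = 0 := by
  ext k; rw [coeff_T, coeff_C_mul, coeff_map, coord_omega_alg ω B hB1]; simp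

variable (n : ℕ)

lemma map_Xn_sub_one :
    ((X : Polynomial Fr) ^ n - 1).map (algebraMap Fr Fq) = (X : Polynomial Fq) ^ n - 1 := by
  simp

lemma dvd_T (π : Fq →ₗ[Fr] Fr) (D : Polynomial Fq)
    (h : ((X : Polynomial Fq) ^ n - 1) ∣ D) :
    ((X : Polynomial Fr) ^ n - 1) ∣ T π D := by
  obtain ⟨u, rfl⟩ := h
  rw [← map_Xn_sub_one (Fr := Fr) (Fq := Fq) n, T_qmul]
  exact Dvd.intro _ rfl

noncomputable abbrev mkq :
    Polynomial Fq →+* Polynomial Fq ⧸ Ideal.span {(X : Polynomial Fq) ^ n - 1} :=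
  Ideal.Quotient.mk (Ideal.span {(X : Polynomial Fq) ^ n - 1})

lemma mk_smul (r : Fr) (m : Polynomial Fq) : mkq n (r • m) = r • mkq n m :=
  Submodule.Quotient.mk_smul _ r m

lemma smul_poly (r : Fr) (m : Polynomial Fq) : r • m = C (algebraMap Fr Fq r) * m := by
  rw [Algebra.smul_def, Polynomial.algebraMap_apply]

lemma mk_mul_mem (S : Set (Polynomial Fq ⧸ Ideal.span {(X : Polynomial Fq) ^ n - 1}))
    (P : Polynomial Fq)
    (hP : ∀ k : ℕ, (mkq n X) ^ k * mkq n P ∈ S) (g : Polynomial Fr) :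
    mkq n (g.map (algebraMap Fr Fq) * P) ∈ Submodule.span Fr S := by
  induction g using Polynomial.induction_on' with
  | add p q hp hq =>
    rw [Polynomial.map_add, add_mul, map_add]
    exact Submodule.add_mem _ hp hq
  | monomial k r =>
    have : (Polynomial.monomial k r).map (algebraMap Fr Fq) * P
        = r • (X ^ k * P) := by
      rw [Polynomial.map_monomial, smul_poly, ← Polynomial.C_mul_X_pow_eq_monomial, mul_assoc]
    rw [this, mk_smul]
    exact Submodule.smul_mem _ _ (Submodule.subset_span (by rw [map_mul, map_pow]; exact hP k))

lemma mem_span_iff (a b c : Polynomial Fr)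
    (x : Polynomial Fq ⧸ Ideal.span {(X : Polynomial Fq) ^ n - 1}) :
    x ∈ Submodule.span Fr (cyclicGenSet Fr ω n a b c) ↔
      ∃ g h : Polynomial Fr,
        x = mkq n (g.map (algebraMap Fr Fq) *
              (a.map (algebraMap Fr Fq) + C ω * b.map (algebraMap Fr Fq)) +
            h.map (algebraMap Fr Fq) * c.map (algebraMap Fr Fq)) := by
  constructor
  · intro hx
    induction hx using Submodule.span_induction with
    | mem m hm =>
      obtain ⟨k, hk | hk⟩ := hm
      · exact ⟨X ^ k, 0, by simp [hk, map_pow]⟩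
      · exact ⟨0, X ^ k, by simp [hk, map_pow]⟩
    | zero => exact ⟨0, 0, by simp⟩
    | add u v _ _ hu hv =>
      obtain ⟨g1, h1, rfl⟩ := hu
      obtain ⟨g2, h2, rfl⟩ := hv
      refine ⟨g1 + g2, h1 + h2, ?_⟩
      rw [← map_add]; congr 1
      rw [Polynomial.map_add, Polynomial.map_add]; ring
    | smul r u _ hu =>
      obtain ⟨g, h, rfl⟩ := hu
      refine ⟨Polynomial.C r * g, Polynomial.C r * h, ?_⟩
      rw [← mk_smul, smul_poly]; congr 1
      rw [Polynomial.map_mul, Polynomial.map_mul, Polynomial.map_C]; ring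
  · rintro ⟨g, h, rfl⟩
    rw [map_add]
    refine Submodule.add_mem _ ?_ ?_
    · exact mk_mul_mem n (cyclicGenSet Fr ω n a b c) _ (fun k => ⟨k, Or.inl rfl⟩) g
    · exact mk_mul_mem n (cyclicGenSet Fr ω n a b c) _ (fun k => ⟨k, Or.inr rfl⟩) h


include hB0 hB1 in
lemma decomp_gen (a b c a' b' : Polynomial Fr)
    (hz : mkq n (a'.map (algebraMap Fr Fq) + C ω * b'.map (algebraMap Fr Fq))
      ∈ Submodule.span Fr (cyclicGenSet Fr ω n a b c)) :
    ∃ g h : Polynomial Fr,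
      ((X : Polynomial Fr) ^ n - 1) ∣ (b' - g * b) ∧
      ((X : Polynomial Fr) ^ n - 1) ∣ (a' - (g * a + h * c)) := by
  rw [mem_span_iff] at hz
  obtain ⟨g, h, heq⟩ := hz
  have hdvd : ((X : Polynomial Fq) ^ n - 1) ∣
      ((a'.map (algebraMap Fr Fq) + C ω * b'.map (algebraMap Fr Fq)) -
        (g.map (algebraMap Fr Fq) *
            (a.map (algebraMap Fr Fq) + C ω * b.map (algebraMap Fr Fq)) +
          h.map (algebraMap Fr Fq) * c.map (algebraMap Fr Fq))) := by
    rw [← Ideal.mem_span_singleton]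
    exact (Ideal.Quotient.eq).mp heq
  refine ⟨g, h, ?_, ?_⟩
  · have h1 := dvd_T n (B.coord 1) _ hdvd
    simp only [T_sub, T_add, T_qmul, T1_q B hB0, T1_omega_q ω B hB1,
      zero_add, add_zero, mul_zero] at h1
    exact h1
  · have h0 := dvd_T n (B.coord 0) _ hdvd
    simp only [T_sub, T_add, T_qmul, T0_q B hB0, T0_omega_q ω B hB1,
      zero_add, add_zero, mul_zero] at h0
    exact h0

lemma cancel_b {n : ℕ} {b g m0 : Polynomial Fr} (hb : b.Monic)
    (hm0 : (X : Polynomial Fr) ^ n - 1 = b * m0)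
    (h : ((X : Polynomial Fr) ^ n - 1) ∣ g * b) : m0 ∣ g := by
  obtain ⟨t, ht⟩ := h
  refine ⟨t, mul_right_cancel₀ hb.ne_zero ?_⟩
  rw [ht, hm0]; ring

end CycAux


/-- Uniqueness of the two-generator representation of a cyclic `F_r`-linear
code over `F_q = F_r(ω)`: if `⟨a + ωb, c⟩ = ⟨a' + ωb', c'⟩` with both triples
satisfying the monicity, divisibility and dimension conditions, then `b' = b`,
`c' = c` and `a' ≡ a (mod c)`. -/
theorem cyclic_two_generators_unique {Fr Fq : Type*} [Field Fr]
    [Field Fq] [Fintype Fr] [Fintype Fq] [Algebra Fr Fq]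
    (ω : Fq) (B : Module.Basis (Fin 2) Fr Fq) (hB0 : B 0 = 1) (hB1 : B 1 = ω)
    {n : ℕ} (hn : 0 < n) (a b c a' b' c' : Polynomial Fr)
    (hb : b.Monic) (hc : c.Monic) (hb' : b'.Monic) (hc' : c'.Monic)
    (hbd : b ∣ (Polynomial.X ^ n - 1)) (hcd : c ∣ (Polynomial.X ^ n - 1))
    (hbd' : b' ∣ (Polynomial.X ^ n - 1)) (hcd' : c' ∣ (Polynomial.X ^ n - 1))
    (hca : c ∣ a * ((Polynomial.X ^ n - 1) /ₘ b))
    (hca' : c' ∣ a' * ((Polynomial.X ^ n - 1) /ₘ b'))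
    (hspan : Submodule.span Fr (cyclicGenSet Fr ω n a b c)
      = Submodule.span Fr (cyclicGenSet Fr ω n a' b' c'))
    (hdim : Module.finrank Fr (Submodule.span Fr (cyclicGenSet Fr ω n a b c))
      = 2 * n - b.natDegree - c.natDegree)
    (hdim' : Module.finrank Fr (Submodule.span Fr (cyclicGenSet Fr ω n a' b' c'))
      = 2 * n - b'.natDegree - c'.natDegree) :
    b' = b ∧ c' = c ∧ c ∣ (a' - a) := by
  classical
  -- memberships of the primed generators in the unprimed span, and conversely
  have hA' : CycAux.mkq n (a'.map (algebraMap Fr Fq) + C ω * b'.map (algebraMap Fr Fq))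
      ∈ Submodule.span Fr (cyclicGenSet Fr ω n a b c) := by
    rw [hspan]
    exact Submodule.subset_span
      (show _ ∈ cyclicGenSet Fr ω n a' b' c' from ⟨0, Or.inl (by rw [pow_zero, one_mul])⟩)
  have hA : CycAux.mkq n (a.map (algebraMap Fr Fq) + C ω * b.map (algebraMap Fr Fq))
      ∈ Submodule.span Fr (cyclicGenSet Fr ω n a' b' c') := by
    rw [← hspan]
    exact Submodule.subset_span
      (show _ ∈ cyclicGenSet Fr ω n a b c from ⟨0, Or.inl (by rw [pow_zero, one_mul])⟩)
  have hC' : CycAux.mkq n (c'.map (algebraMap Fr Fq)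
        + C ω * (0 : Polynomial Fr).map (algebraMap Fr Fq))
      ∈ Submodule.span Fr (cyclicGenSet Fr ω n a b c) := by
    rw [hspan]
    refine Submodule.subset_span
      (show _ ∈ cyclicGenSet Fr ω n a' b' c' from ⟨0, Or.inr ?_⟩)
    rw [pow_zero, one_mul]; simp
  have hC : CycAux.mkq n (c.map (algebraMap Fr Fq)
        + C ω * (0 : Polynomial Fr).map (algebraMap Fr Fq))
      ∈ Submodule.span Fr (cyclicGenSet Fr ω n a' b' c') := by
    rw [← hspan]
    refine Submodule.subset_span
      (show _ ∈ cyclicGenSet Fr ω n a b c from ⟨0, Or.inr ?_⟩)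
    rw [pow_zero, one_mul]; simp
  obtain ⟨g1, h1, hg1, ha1⟩ := CycAux.decomp_gen ω B hB0 hB1 n a b c a' b' hA'
  obtain ⟨g1', h1', hg1', _⟩ := CycAux.decomp_gen ω B hB0 hB1 n a' b' c' a b hA
  obtain ⟨g2, h2, hg2, hc2⟩ := CycAux.decomp_gen ω B hB0 hB1 n a b c c' 0 hC'
  obtain ⟨g2', h2', hg2', hc2'⟩ := CycAux.decomp_gen ω B hB0 hB1 n a' b' c' c 0 hC
  -- b' = b
  have hbb' : b ∣ b' := by
    have h2 : b ∣ b' - g1 * b := hbd.trans hg1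
    have h3 := dvd_add h2 (Dvd.intro_left g1 rfl)
    simpa using h3
  have hb'b : b' ∣ b := by
    have h2 : b' ∣ b - g1' * b' := hbd'.trans hg1'
    have h3 := dvd_add h2 (Dvd.intro_left g1' rfl)
    simpa using h3
  have hbeq : b' = b :=
    Polynomial.eq_of_monic_of_associated hb' hb (associated_of_dvd_dvd hb'b hbb')
  -- set up the exact factorizations
  obtain ⟨m0, hm0⟩ := hbd
  obtain ⟨m0', hm0'⟩ := hbd'
  have hma : c ∣ a * m0 := by
    have e : ((X : Polynomial Fr) ^ n - 1) /ₘ b = m0 := by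
      rw [hm0, Polynomial.mul_divByMonic_cancel_left _ hb]
    rwa [e] at hca
  have hma' : c' ∣ a' * m0' := by
    have e : ((X : Polynomial Fr) ^ n - 1) /ₘ b' = m0' := by
      rw [hm0', Polynomial.mul_divByMonic_cancel_left _ hb']
    rwa [e] at hca'
  -- c ∣ c'
  have hcc' : c ∣ c' := by
    have hm0g2 : m0 ∣ g2 := CycAux.cancel_b hb hm0 (by
      have := hg2; rw [zero_sub] at this; exact dvd_neg.mp this)
    obtain ⟨t2, ht2⟩ := hm0g2
    have hcg2a : c ∣ g2 * a := by
      have e : g2 * a = t2 * (a * m0) := by rw [ht2]; ring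
      rw [e]; exact hma.mul_left t2
    have h3 : c ∣ c' - (g2 * a + h2 * c) := hcd.trans hc2
    have h4 := dvd_add h3 (dvd_add hcg2a (Dvd.intro_left h2 rfl))
    simpa using h4
  have hc'c : c' ∣ c := by
    have hm0g2' : m0' ∣ g2' := CycAux.cancel_b hb' hm0' (by
      have := hg2'; rw [zero_sub] at this; exact dvd_neg.mp this)
    obtain ⟨t2, ht2⟩ := hm0g2'
    have hcg2a : c' ∣ g2' * a' := by
      have e : g2' * a' = t2 * (a' * m0') := by rw [ht2]; ring
      rw [e]; exact hma'.mul_left t2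
    have h3 : c' ∣ c - (g2' * a' + h2' * c') := hcd'.trans hc2'
    have h4 := dvd_add h3 (dvd_add hcg2a (Dvd.intro_left h2' rfl))
    simpa using h4
  have hceq : c' = c :=
    Polynomial.eq_of_monic_of_associated hc' hc (associated_of_dvd_dvd hc'c hcc')
  refine ⟨hbeq, hceq, ?_⟩
  -- c ∣ a' - a
  have hg1b : ((X : Polynomial Fr) ^ n - 1) ∣ (1 - g1) * b := by
    rw [hbeq] at hg1
    have e : (1 - g1) * b = b - g1 * b := by ring
    rwa [e]
  obtain ⟨t1, ht1⟩ := CycAux.cancel_b hb hm0 hg1b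
  have hcg1a : c ∣ (g1 - 1) * a := by
    have e : (g1 - 1) * a = -(t1 * (a * m0)) := by
      have : g1 - 1 = -(m0 * t1) := by rw [← ht1]; ring
      rw [this]; ring
    rw [e]
    exact dvd_neg.mpr (hma.mul_left t1)
  have e2 : a' - a = (a' - (g1 * a + h1 * c)) + ((g1 - 1) * a + h1 * c) := by ring
  rw [e2]
  exact dvd_add (hcd.trans ha1) (dvd_add hcg1a (Dvd.intro_left h1 rfl))
end
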